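/- Under the mixture observation model, the scatter matrix satisfies λ_max(E_{x∼p}[z(x)_S z(x)_Sᵀ]) ≤ ν·|S| + (1−ν). -/

import Mathlib

/- Common setup: linear influence games (LIGs), the PSNE set, the noisy
observation model, feature vectors, the logistic loss and its gradient,
population/sample Hessian and scatter matrices, and Rayleigh-quotient
encodings of eigenvalue bounds for (symmetric) submatrices.

Joint actions in `{-1,+1}^n` are modeled as `Fin n → Bool` via the sign map
`sgn` (`true ↦ +1`, `false ↦ -1`).  For player `i`, the feature vector
`z_i(x) = (x_i · x_{-i}, x_i)` and the parameter vector `v_i = (w_{i,-i}, -b_i)`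
are indexed by `Fin n`, with the bias coordinate placed at index `i`
(a fixed permutation of the paper's coordinate ordering), so that
`v_i ⬝ᵥ z_i(x) = x_i (∑_{j ≠ i} W i j · x_j - b i)` is player `i`'s payoff. -/

open Matrix Finset

noncomputable section

/-- Sign of a Boolean action: `true ↦ +1`, `false ↦ -1`. -/
def sgn (a : Bool) : ℝ := if a then 1 else -1

/-- Payoff of player `i` at joint action `x` in the LIG `(W, b)`:
`x_i (∑_{j ≠ i} W i j · x_j - b i)`. -/
def payoff {n : ℕ} (W : Matrix (Fin n) (Fin n) ℝ) (b : Fin n → ℝ)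
    (i : Fin n) (x : Fin n → Bool) : ℝ :=
  sgn (x i) * ((∑ j ∈ Finset.univ.erase i, W i j * sgn (x j)) - b i)

/-- The pure-strategy Nash equilibria set `NE(W, b)`. -/
def NEset {n : ℕ} (W : Matrix (Fin n) (Fin n) ℝ) (b : Fin n → ℝ) :
    Finset (Fin n → Bool) :=
  @Finset.filter _ (fun x => ∀ i, 0 ≤ payoff W b i x) (Classical.decPred _)
    Finset.univ

/-- The observation distribution
`p(x) = q·1[x ∈ NE]/|NE| + (1-q)·1[x ∉ NE]/(2^n - |NE|)`. -/
def pObs {n : ℕ} (q : ℝ) (NE : Finset (Fin n → Bool)) (x : Fin n → Bool) : ℝ :=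
  if x ∈ NE then q / (NE.card : ℝ)
  else (1 - q) / ((2 : ℝ) ^ n - (NE.card : ℝ))

/-- The mixture coefficient `ν = (q - c/2^n)/(1 - c/2^n)`, where `c = |NE*|`. -/
def mixCoef (n : ℕ) (q : ℝ) (c : ℕ) : ℝ :=
  (q - (c : ℝ) / (2 : ℝ) ^ n) / (1 - (c : ℝ) / (2 : ℝ) ^ n)

/-- Feature vector `z_i(x) = (x_i·x_{-i}, x_i)` (bias coordinate at index `i`). -/
def zvec {n : ℕ} (i : Fin n) (x : Fin n → Bool) : Fin n → ℝ :=
  fun j => if j = i then sgn (x i) else sgn (x i) * sgn (x j)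

/-- Parameter vector `v_i = (w_{i,-i}, -b_i)` (bias coordinate at index `i`). -/
def vvec {n : ℕ} (W : Matrix (Fin n) (Fin n) ℝ) (b : Fin n → ℝ) (i : Fin n) :
    Fin n → ℝ :=
  fun j => if j = i then -b i else W i j

/-- Support `S = {j : v_j ≠ 0}` of a vector. -/
def supp {n : ℕ} (v : Fin n → ℝ) : Finset (Fin n) :=
  @Finset.filter _ (fun j => v j ≠ 0) (Classical.decPred _) Finset.univ

/-- `η(s) = 1/(e^{s/2} + e^{-s/2})²`. -/
def eta (s : ℝ) : ℝ := 1 / (Real.exp (s / 2) + Real.exp (-s / 2)) ^ 2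

/-- Logistic loss `ℓ_i(v, D) = (1/m) ∑_l log(1 + exp(-vᵀ z_i(x⁽ˡ⁾)))`. -/
def loss {n m : ℕ} (i : Fin n) (v : Fin n → ℝ)
    (D : Fin m → (Fin n → Bool)) : ℝ :=
  (1 / (m : ℝ)) * ∑ l, Real.log (1 + Real.exp (-(v ⬝ᵥ zvec i (D l))))

/-- Gradient of the logistic loss,
`∇ℓ(v, D) = (1/m) ∑_l (-z⁽ˡ⁾)/(1 + exp(vᵀ z⁽ˡ⁾))`. -/
def gradLoss {n m : ℕ} (i : Fin n) (v : Fin n → ℝ)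
    (D : Fin m → (Fin n → Bool)) : Fin n → ℝ :=
  fun j => (1 / (m : ℝ)) *
    ∑ l, -(zvec i (D l) j) / (1 + Real.exp (v ⬝ᵥ zvec i (D l)))

/-- ℓ1 norm `‖v‖₁ = ∑_j |v_j|`. -/
def norm1 {n : ℕ} (v : Fin n → ℝ) : ℝ := ∑ j, |v j|

/-- Quadratic form `yᵀ M y`. -/
def quadForm {n : ℕ} (M : Matrix (Fin n) (Fin n) ℝ) (y : Fin n → ℝ) : ℝ :=
  y ⬝ᵥ M.mulVec y

/-- `λ_min(M_SS) ≥ c`, encoded via the Rayleigh quotient over vectors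
supported on `S` (exactly equivalent for symmetric `M`). -/
def minEigSubGE {n : ℕ} (M : Matrix (Fin n) (Fin n) ℝ) (S : Finset (Fin n))
    (c : ℝ) : Prop :=
  ∀ y : Fin n → ℝ, (∀ j ∉ S, y j = 0) → c * (∑ j, y j ^ 2) ≤ quadForm M y

/-- `λ_min(M_SS) > c` (Rayleigh form; equivalent for symmetric `M` since the
unit sphere of the finite-dimensional subspace is compact). -/
def minEigSubGT {n : ℕ} (M : Matrix (Fin n) (Fin n) ℝ) (S : Finset (Fin n))
    (c : ℝ) : Prop :=
  ∀ y : Fin n → ℝ, (∀ j ∉ S, y j = 0) → y ≠ 0 →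
    c * (∑ j, y j ^ 2) < quadForm M y

/-- `λ_max(M_SS) ≤ c` (Rayleigh form). -/
def maxEigSubLE {n : ℕ} (M : Matrix (Fin n) (Fin n) ℝ) (S : Finset (Fin n))
    (c : ℝ) : Prop :=
  ∀ y : Fin n → ℝ, (∀ j ∉ S, y j = 0) → quadForm M y ≤ c * (∑ j, y j ^ 2)

/-- `λ_max(M_SS) < c` (Rayleigh form). -/
def maxEigSubLT {n : ℕ} (M : Matrix (Fin n) (Fin n) ℝ) (S : Finset (Fin n))
    (c : ℝ) : Prop :=
  ∀ y : Fin n → ℝ, (∀ j ∉ S, y j = 0) → y ≠ 0 →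
    quadForm M y < c * (∑ j, y j ^ 2)

/-- `λ_max(M_SS) ≥ c` (Rayleigh form: some nonzero supported vector attains it). -/
def maxEigSubGE {n : ℕ} (M : Matrix (Fin n) (Fin n) ℝ) (S : Finset (Fin n))
    (c : ℝ) : Prop :=
  ∃ y : Fin n → ℝ, (∀ j ∉ S, y j = 0) ∧ y ≠ 0 ∧
    c * (∑ j, y j ^ 2) ≤ quadForm M y

/-- Population Hessian `H*_i = E_{x∼p}[η(vᵀz_i(x)) z_i(x) z_i(x)ᵀ]`. -/
def popHess {n : ℕ} (q : ℝ) (NE : Finset (Fin n → Bool)) (i : Fin n)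
    (v : Fin n → ℝ) : Matrix (Fin n) (Fin n) ℝ :=
  ∑ x : Fin n → Bool,
    (pObs q NE x * eta (v ⬝ᵥ zvec i x)) • vecMulVec (zvec i x) (zvec i x)

/-- Population scatter matrix `E_{x∼p}[z_i(x) z_i(x)ᵀ]`. -/
def popScatter {n : ℕ} (q : ℝ) (NE : Finset (Fin n → Bool)) (i : Fin n) :
    Matrix (Fin n) (Fin n) ℝ :=
  ∑ x : Fin n → Bool, pObs q NE x • vecMulVec (zvec i x) (zvec i x)

/-- Sample Hessian `H^m = (1/m) ∑_l η(vᵀz⁽ˡ⁾) z⁽ˡ⁾ (z⁽ˡ⁾)ᵀ`. -/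
def sampleHess {n m : ℕ} (i : Fin n) (v : Fin n → ℝ)
    (D : Fin m → (Fin n → Bool)) : Matrix (Fin n) (Fin n) ℝ :=
  (1 / (m : ℝ)) •
    ∑ l, eta (v ⬝ᵥ zvec i (D l)) • vecMulVec (zvec i (D l)) (zvec i (D l))

/-- Sample scatter matrix `(1/m) ∑_l z⁽ˡ⁾ (z⁽ˡ⁾)ᵀ`. -/
def sampleScatter {n m : ℕ} (i : Fin n) (D : Fin m → (Fin n → Bool)) :
    Matrix (Fin n) (Fin n) ℝ :=
  (1 / (m : ℝ)) • ∑ l, vecMulVec (zvec i (D l)) (zvec i (D l))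

/-- Probability of the event `E` under `m` i.i.d. draws from `p`. -/
def iidProb {X : Type*} [Fintype X] (p : X → ℝ) (m : ℕ)
    (E : Set (Fin m → X)) : ℝ :=
  ∑ D : Fin m → X, E.indicator (fun D => ∏ l, p (D l)) D

/-- `ρ` is the minimum payoff over the PSNE set of `(W, b)`. -/
def isMinPayoff {n : ℕ} (W : Matrix (Fin n) (Fin n) ℝ) (b : Fin n → ℝ)
    (ρ : ℝ) : Prop :=
  IsLeast {r : ℝ | ∃ x ∈ NEset W b, ∃ i, r = payoff W b i x} ρ


section AuxLemmas

lemma sgn_not (a : Bool) : sgn (!a) = - sgn a := by cases a <;> simp [sgn]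

lemma sgn_mul_self (a : Bool) : sgn a * sgn a = 1 := by cases a <;> norm_num [sgn]

lemma zvec_mul_self {n : ℕ} (i : Fin n) (x : Fin n → Bool) (j : Fin n) :
    zvec i x j * zvec i x j = 1 := by
  unfold zvec
  split_ifs
  · exact sgn_mul_self _
  · rw [mul_mul_mul_comm, sgn_mul_self, sgn_mul_self, one_mul]

lemma flip_sum_zero {n : ℕ} (k : Fin n) (g : (Fin n → Bool) → ℝ)
    (h : ∀ x, g (Function.update x k (!x k)) = - g x) :
    ∑ x : Fin n → Bool, g x = 0 := by
  have hinv : Function.Involutive (fun x : Fin n → Bool => Function.update x k (!x k)) := by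
    intro x
    funext j
    by_cases hj : j = k <;> simp [Function.update, hj]
  have h2 : ∑ x : Fin n → Bool, g x = ∑ x : Fin n → Bool, - g x :=
    Fintype.sum_bijective _ hinv.bijective g (fun x => - g x)
      (fun x => by show g x = - g _; rw [h x, neg_neg])
  rw [Finset.sum_neg_distrib] at h2
  linarith

lemma zvec_update {n : ℕ} (i c : Fin n) (hc : c ≠ i) (x : Fin n → Bool) (m : Fin n) :
    zvec i (Function.update x c (!x c)) m = (if m = c then -1 else 1) * zvec i x m := by
  have hic : i ≠ c := Ne.symm hc
  by_cases hm : m = i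
  · subst hm
    unfold zvec
    rw [if_pos rfl, if_pos rfl, if_neg hic, Function.update_of_ne hic, one_mul]
  · by_cases hmc : m = c
    · subst hmc
      unfold zvec
      rw [if_neg hm, if_neg hm, Function.update_of_ne hic, Function.update_self,
        sgn_not, if_pos rfl]
      ring
    · unfold zvec
      rw [if_neg hm, if_neg hm, if_neg hmc, Function.update_of_ne hic,
        Function.update_of_ne hmc, one_mul]

lemma zvec_offdiag_sum {n : ℕ} (i j k : Fin n) (hjk : j ≠ k) :
    ∑ x : Fin n → Bool, zvec i x j * zvec i x k = 0 := by
  by_cases h : j = i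
  · have hci : k ≠ i := by rw [← h]; exact Ne.symm hjk
    apply flip_sum_zero k
    intro x
    rw [zvec_update i k hci, zvec_update i k hci]
    rw [if_neg hjk, if_pos rfl]
    ring
  · apply flip_sum_zero j
    intro x
    rw [zvec_update i j h, zvec_update i j h]
    rw [if_pos rfl, if_neg (Ne.symm hjk)]
    ring

lemma zvec_dot_sq_sum {n : ℕ} (i : Fin n) (y : Fin n → ℝ) :
    ∑ x : Fin n → Bool, (zvec i x ⬝ᵥ y) ^ 2 = (2 : ℝ) ^ n * ∑ j, y j ^ 2 := by
  have expand : ∀ x : Fin n → Bool, (zvec i x ⬝ᵥ y) ^ 2 =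
      ∑ j, ∑ k, (y j * y k) * (zvec i x j * zvec i x k) := by
    intro x
    rw [dotProduct, sq, Finset.sum_mul_sum]
    exact Finset.sum_congr rfl fun j _ => Finset.sum_congr rfl fun k _ => by ring
  simp_rw [expand]
  rw [Finset.sum_comm]
  have key : ∀ j : Fin n, ∑ x : Fin n → Bool, ∑ k, (y j * y k) * (zvec i x j * zvec i x k)
      = (2:ℝ)^n * y j ^ 2 := by
    intro j
    rw [Finset.sum_comm]
    rw [Finset.sum_eq_single j]
    · rw [← Finset.mul_sum]
      have : ∑ x : Fin n → Bool, zvec i x j * zvec i x j = (2:ℝ)^n := by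
        simp [zvec_mul_self, Finset.card_univ]
      rw [this]; ring
    · intro k _ hk
      rw [← Finset.mul_sum, zvec_offdiag_sum i j k (Ne.symm hk), mul_zero]
    · intro h; exact absurd (Finset.mem_univ j) h
  rw [Finset.sum_congr rfl fun j _ => key j, ← Finset.mul_sum]

lemma quad_weighted {n : ℕ} (i : Fin n) (w : (Fin n → Bool) → ℝ) (y : Fin n → ℝ) :
    quadForm (∑ x : Fin n → Bool, w x • vecMulVec (zvec i x) (zvec i x)) y
      = ∑ x : Fin n → Bool, w x * (zvec i x ⬝ᵥ y) ^ 2 := by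
  unfold quadForm
  simp only [Matrix.mulVec, dotProduct, Matrix.sum_apply, Matrix.smul_apply,
    vecMulVec_apply, smul_eq_mul, Finset.sum_mul, Finset.mul_sum, sq]
  refine Eq.trans (Finset.sum_congr rfl fun j _ => Finset.sum_comm) ?_
  refine Eq.trans Finset.sum_comm ?_
  refine Finset.sum_congr rfl fun x _ => ?_
  exact Finset.sum_congr rfl fun j _ => Finset.sum_congr rfl fun k _ => by ring

end AuxLemmas

/-- under the mixture observation model, the scatter matrix
satisfies `λ_max(E_{x∼p}[z_S z_Sᵀ]) ≤ ν·|S| + (1-ν)`. -/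
theorem population_scatter_max_eig
    (n : ℕ) (W : Matrix (Fin n) (Fin n) ℝ) (b : Fin n → ℝ)
    (hdiag : ∀ i, W i i = 0) (q : ℝ)
    (hNE1 : 1 ≤ (NEset W b).card) (hNE2 : (NEset W b).card < 2 ^ n)
    (hq1 : ((NEset W b).card : ℝ) / (2 : ℝ) ^ n < q) (hq2 : q < 1)
    (i : Fin n) :
    maxEigSubLE (popScatter q (NEset W b) i) (supp (vvec W b i))
      (mixCoef n q (NEset W b).card * ((supp (vvec W b i)).card : ℝ) +
        (1 - mixCoef n q (NEset W b).card)) := by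
  intro y hy
  classical
  set NE := NEset W b with hNEdef
  set S := supp (vvec W b i) with hSdef
  set ν := mixCoef n q NE.card with hnu
  set T : ℝ := ∑ j, y j ^ 2 with hT
  set c : ℝ := (NE.card : ℝ) with hcdef
  set P : ℝ := (2 : ℝ) ^ n with hPdef
  have hP0 : (0:ℝ) < P := by positivity
  have hc1 : (1:ℝ) ≤ c := by rw [hcdef]; exact_mod_cast hNE1
  have hc0 : (0:ℝ) < c := lt_of_lt_of_le one_pos hc1
  have hcP : c < P := by
    rw [hcdef, hPdef]
    exact_mod_cast hNE2
  have hPc0 : (0:ℝ) < P - c := sub_pos.mpr hcP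
  have hd0 : (0:ℝ) < 1 - c / P := by
    rw [sub_pos, div_lt_one hP0]; exact hcP
  have hnu_eq : ν = (q - c / P) / (1 - c / P) := rfl
  have hnu0 : 0 ≤ ν := by
    rw [hnu_eq]
    exact div_nonneg (by linarith) hd0.le
  have e1 : (1 - q) / (P - c) = (1 - ν) / P := by
    rw [hnu_eq]
    field_simp
    ring
  have e2 : q / c = ν / c + (1 - ν) / P := by
    rw [hnu_eq]
    field_simp
    ring
  have hT0 : 0 ≤ T := Finset.sum_nonneg fun j _ => sq_nonneg _
  -- Cauchy-Schwarz pointwise bound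
  have hCS : ∀ x : Fin n → Bool, (zvec i x ⬝ᵥ y) ^ 2 ≤ (S.card : ℝ) * T := by
    intro x
    have hzy : zvec i x ⬝ᵥ y = ∑ j ∈ S, zvec i x j * y j := by
      rw [dotProduct]
      exact (Finset.sum_subset (Finset.subset_univ S)
        (fun j _ hj => by rw [hy j hj, mul_zero])).symm
    rw [hzy]
    calc (∑ j ∈ S, zvec i x j * y j) ^ 2
        ≤ (∑ j ∈ S, zvec i x j ^ 2) * ∑ j ∈ S, y j ^ 2 :=
          Finset.sum_mul_sq_le_sq_mul_sq S _ _
      _ ≤ (S.card : ℝ) * T := by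
          have h1 : ∑ j ∈ S, zvec i x j ^ 2 = (S.card : ℝ) := by
            simp [sq, zvec_mul_self]
          have h2 : ∑ j ∈ S, y j ^ 2 ≤ T :=
            Finset.sum_le_sum_of_subset_of_nonneg (Finset.subset_univ S)
              (fun j _ _ => sq_nonneg _)
          rw [h1]
          exact mul_le_mul_of_nonneg_left h2 (Nat.cast_nonneg _)
  -- quadForm as weighted sum
  have hquad : quadForm (popScatter q NE i) y
      = ∑ x : Fin n → Bool, pObs q NE x * (zvec i x ⬝ᵥ y) ^ 2 :=
    quad_weighted i (pObs q NE) y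
  set s : (Fin n → Bool) → ℝ := fun x => (zvec i x ⬝ᵥ y) ^ 2 with hsdef
  have hs0 : ∀ x, 0 ≤ s x := fun x => sq_nonneg _
  set A : ℝ := ∑ x ∈ NE, s x with hA
  have hA0 : 0 ≤ A := Finset.sum_nonneg fun x _ => hs0 x
  have hAle : A ≤ c * ((S.card : ℝ) * T) := by
    calc A ≤ ∑ _x ∈ NE, (S.card : ℝ) * T := Finset.sum_le_sum fun x _ => hCS x
      _ = c * ((S.card : ℝ) * T) := by rw [Finset.sum_const, nsmul_eq_mul]
  have htot : ∑ x : Fin n → Bool, s x = P * T := zvec_dot_sq_sum i y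
  -- split the sum over NE and its complement
  have hsplit : ∑ x : Fin n → Bool, pObs q NE x * s x
      = (1 - q) / (P - c) * (P * T - A) + q / c * A := by
    rw [← Finset.sum_sdiff (Finset.subset_univ NE)]
    have hL : ∑ x ∈ Finset.univ \ NE, pObs q NE x * s x
        = (1 - q) / (P - c) * (P * T - A) := by
      rw [show P * T - A = ∑ x ∈ Finset.univ \ NE, s x by
        rw [← htot, ← Finset.sum_sdiff (Finset.subset_univ NE)]; rw [hA]; ring,
        Finset.mul_sum]
      refine Finset.sum_congr rfl fun x hx => ?_
      rw [Finset.mem_sdiff] at hx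
      rw [pObs, if_neg hx.2]
    have hR : ∑ x ∈ NE, pObs q NE x * s x = q / c * A := by
      rw [hA, Finset.mul_sum]
      refine Finset.sum_congr rfl fun x hx => ?_
      rw [pObs, if_pos hx]
    rw [hL, hR]
  rw [hquad, hsplit]
  -- final arithmetic
  have key : (1 - q) / (P - c) * (P * T - A) + q / c * A
      = (1 - ν) * T + (ν / c) * A := by
    rw [e1, e2]
    field_simp
    ring
  rw [key]
  have h2 : (ν / c) * A ≤ (ν / c) * (c * ((S.card : ℝ) * T)) :=
    mul_le_mul_of_nonneg_left hAle (div_nonneg hnu0 hc0.le)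
  have h3 : (ν / c) * (c * ((S.card : ℝ) * T)) = ν * ((S.card : ℝ) * T) := by
    field_simp
  rw [h3] at h2
  calc (1 - ν) * T + (ν / c) * A ≤ (1 - ν) * T + ν * ((S.card : ℝ) * T) := by linarith
    _ = (ν * (S.card : ℝ) + (1 - ν)) * T := by ring
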